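/- Let (A₁,…,A_n) be a toric system on a smooth projective surface X and let A_{k…l} = A_k + A_{k+1} + … + A_l for a cyclic segment [k,…,l]. Then A_{k…l} is numerically left-orthogonal and A_{k…l}² + 2 = Σ_{i=k}^{l} (A_i² + 2). -/

import Mathlib

/-- The numerical data of a smooth projective rational surface `X`
(over an algebraically closed field of characteristic zero):
its Picard group with the intersection form, the canonical class `K`,
the dimensions `hⁱ(D)` of cohomology of line bundles, Serre duality,
the Riemann–Roch formula `χ(D) = 1 + D·(D−K)/2` (which encodes `χ(O_X)=1`),
the effectivity predicate and the classes of irreducible reduced curves. -/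
structure Surface where
  Pic : Type
  [grp : AddCommGroup Pic]
  inter : Pic → Pic → ℤ
  inter_symm : ∀ D E, inter D E = inter E D
  inter_add_left : ∀ D E F, inter (D + E) F = inter D F + inter E F
  inter_zsmul_left : ∀ (m : ℤ) (D E : Pic), inter (m • D) E = m * inter D E
  K : Pic
  h0 : Pic → ℕ
  h1 : Pic → ℕ
  h2 : Pic → ℕ
  serre : ∀ D, h2 D = h0 (K - D)
  riemannRoch : ∀ D,
    2 * ((h0 D : ℤ) - (h1 D : ℤ) + (h2 D : ℤ)) = 2 + inter D (D - K)
  IrredCurve : Pic → Prop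
  Effective : Pic → Prop
  effective_iff_h0 : ∀ D, Effective D ↔ 0 < h0 D
  effective_decomp : ∀ D, Effective D ↔
    ∃ c : Pic →₀ ℕ, (∀ C ∈ c.support, IrredCurve C) ∧ D = c.sum fun C k => k • C
  inter_irred_nonneg : ∀ C C', IrredCurve C → IrredCurve C' → C ≠ C' → 0 ≤ inter C C'

attribute [instance] Surface.grp

namespace Surface

variable (S : Surface)

/-- The Euler characteristic `χ(D) = h⁰(D) − h¹(D) + h²(D)`. -/
def chi (D : S.Pic) : ℤ := (S.h0 D : ℤ) - (S.h1 D : ℤ) + (S.h2 D : ℤ)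

/-- `D` is numerically left-orthogonal: `χ(−D) = 0`. -/
def NumLeftOrth (D : S.Pic) : Prop := S.chi (-D) = 0

/-- `D` is an `r`-class: numerically left-orthogonal with `D² = r`. -/
def IsClass (r : ℤ) (D : S.Pic) : Prop := S.NumLeftOrth D ∧ S.inter D D = r

/-- `D` is nef: nonnegative intersection with every irreducible curve. -/
def Nef (D : S.Pic) : Prop := ∀ C, S.IrredCurve C → 0 ≤ S.inter D C

/-- `X` is a weak del Pezzo surface: `K² > 0` and `−K` is nef. -/
def WeakDelPezzo : Prop := 0 < S.inter S.K S.K ∧ S.Nef (-S.K)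

end Surface

/-- A toric system `(A₁, …, A_n)`: cyclically consecutive classes meet in `1`,
all other pairs are orthogonal, and the total sum is `−K`. -/
def IsToricSystem (S : Surface) {n : ℕ} [NeZero n] (A : Fin n → S.Pic) : Prop :=
  (∀ i : Fin n, S.inter (A i) (A (i + 1)) = 1) ∧
  (∀ i j : Fin n, j ≠ i → j ≠ i + 1 → i ≠ j + 1 → S.inter (A i) (A j) = 0) ∧
  (∑ i, A i = -S.K)

namespace Surface
variable (S : Surface)
lemma inter_zero_left' (E : S.Pic) : S.inter 0 E = 0 := by
  have := S.inter_zsmul_left 0 0 E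
  simpa using this

lemma inter_neg_left' (D E : S.Pic) : S.inter (-D) E = -S.inter D E := by
  have := S.inter_zsmul_left (-1) D E
  simpa using this

lemma inter_add_right' (D E F : S.Pic) : S.inter D (E + F) = S.inter D E + S.inter D F := by
  rw [S.inter_symm, S.inter_add_left, S.inter_symm E, S.inter_symm F]

lemma inter_neg_right' (D E : S.Pic) : S.inter D (-E) = -S.inter D E := by
  rw [S.inter_symm, S.inter_neg_left', S.inter_symm]

lemma inter_sum_left' {ι : Type*} (s : Finset ι) (g : ι → S.Pic) (E : S.Pic) :
    S.inter (∑ i ∈ s, g i) E = ∑ i ∈ s, S.inter (g i) E := by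
  classical
  induction s using Finset.induction_on with
  | empty => simp [S.inter_zero_left']
  | @insert a s ha ih => rw [Finset.sum_insert ha, Finset.sum_insert ha, S.inter_add_left, ih]

lemma inter_sum_right' {ι : Type*} (s : Finset ι) (g : ι → S.Pic) (E : S.Pic) :
    S.inter E (∑ i ∈ s, g i) = ∑ i ∈ s, S.inter E (g i) := by
  rw [S.inter_symm, S.inter_sum_left']
  exact Finset.sum_congr rfl fun i _ => S.inter_symm _ _

end Surface


lemma dsum_aux (f : ℕ → ℕ → ℤ) (m : ℕ) (hm : 1 ≤ m)
    (h1 : ∀ i, i + 1 < m → f i (i + 1) = 1)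
    (h1' : ∀ i, i + 1 < m → f (i + 1) i = 1)
    (h0 : ∀ i j, i < m → j < m → i ≠ j → j ≠ i + 1 → i ≠ j + 1 → f i j = 0) :
    ∑ i ∈ Finset.range m, ∑ j ∈ Finset.range m, f i j
      = (∑ i ∈ Finset.range m, f i i) + 2 * ((m : ℤ) - 1) := by
  induction m with
  | zero => omega
  | succ m ih =>
    rcases Nat.eq_zero_or_pos m with rfl | hm'
    · simp
    · obtain ⟨t, rfl⟩ : ∃ t, m = t + 1 := ⟨m - 1, by omega⟩
      have hcol : ∑ i ∈ Finset.range (t + 1), f i (t + 1) = 1 := by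
        rw [Finset.sum_range_succ]
        have hz : ∑ i ∈ Finset.range t, f i (t + 1) = 0 := by
          refine Finset.sum_eq_zero ?_
          intro i hi
          rw [Finset.mem_range] at hi
          exact h0 _ _ (by omega) (by omega) (by omega) (by omega) (by omega)
        rw [hz, h1 t (by omega)]
        ring
      have hrow : ∑ j ∈ Finset.range (t + 1), f (t + 1) j = 1 := by
        rw [Finset.sum_range_succ]
        have hz : ∑ j ∈ Finset.range t, f (t + 1) j = 0 := by
          refine Finset.sum_eq_zero ?_
          intro j hj
          rw [Finset.mem_range] at hj
          exact h0 _ _ (by omega) (by omega) (by omega) (by omega) (by omega)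
        rw [hz, h1' t (by omega)]
        ring
      have ihv := ih (by omega) (fun i hi => h1 i (by omega)) (fun i hi => h1' i (by omega))
        (fun i j hi hj a b c => h0 i j (by omega) (by omega) a b c)
      have e1 : ∀ i, ∑ j ∈ Finset.range (t + 1 + 1), f i j
          = ∑ j ∈ Finset.range (t + 1), f i j + f i (t + 1) :=
        fun i => Finset.sum_range_succ _ _
      have eouter : ∑ i ∈ Finset.range (t + 1 + 1), ∑ j ∈ Finset.range (t + 1 + 1), f i j
          = ∑ i ∈ Finset.range (t + 1), ∑ j ∈ Finset.range (t + 1 + 1), f i j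
            + ∑ j ∈ Finset.range (t + 1 + 1), f (t + 1) j := Finset.sum_range_succ _ _
      have eR : ∑ i ∈ Finset.range (t + 1 + 1), f i i
          = ∑ i ∈ Finset.range (t + 1), f i i + f (t + 1) (t + 1) := Finset.sum_range_succ _ _
      rw [eouter, eR]
      simp only [e1]
      rw [Finset.sum_add_distrib, ihv, hcol, hrow]
      push_cast
      ring

open Fin.NatCast

/-- For a toric system `(A₁,…,A_n)` of maximal length
(`n = rank K₀(X) = 12 − K²`) on a smooth projective surface with `χ(O_X) = 1`, the sum
`A_{k…l} = A_k + ⋯ + A_l` over a (proper, nonempty) cyclic segment, here the segment of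
length `m` starting at `k`, is numerically left-orthogonal and satisfies
`A_{k…l}² + 2 = Σ_{i=k}^{l} (A_i² + 2)`. -/
theorem stmt15 (S : Surface) (n : ℕ) [NeZero n] (A : Fin n → S.Pic)
    (hA : IsToricSystem S A) (hn : (n : ℤ) = 12 - S.inter S.K S.K)
    (k : Fin n) (m : ℕ) (hm1 : 1 ≤ m) (hm2 : m ≤ n - 1) :
    S.NumLeftOrth (∑ j ∈ Finset.range m, A (k + (j : Fin n))) ∧
    S.inter (∑ j ∈ Finset.range m, A (k + (j : Fin n)))
        (∑ j ∈ Finset.range m, A (k + (j : Fin n))) + 2 =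
      ∑ j ∈ Finset.range m,
        (S.inter (A (k + (j : Fin n))) (A (k + (j : Fin n))) + 2) := by
  obtain ⟨ht1, ht0, htK⟩ := hA
  have hn2 : 2 ≤ n := by omega
  -- rule out n = 2
  have hn3 : 3 ≤ n := by
    by_contra h
    have hn2' : n = 2 := by omega
    subst hn2'
    have hsum : A 0 + A 1 = -S.K := by
      rw [← htK, Fin.sum_univ_two]
    have h01 : S.inter (A 0) (A 1) = 1 := by
      have := ht1 0
      norm_num at this
      exact this
    have hrr := S.riemannRoch (-(A 0))
    have he : -(A 0) - S.K = A 1 := by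
      rw [sub_eq_add_neg, ← hsum]
      abel
    rw [he, S.inter_neg_left', h01] at hrr
    omega
  -- basic Fin facts
  have natInj : ∀ a b : ℕ, a < n → b < n → (a : Fin n) = (b : Fin n) → a = b := by
    intro a b ha hb h
    have := congrArg Fin.val h
    rwa [Fin.val_cast_of_lt ha, Fin.val_cast_of_lt hb] at this
  have one_ne : (1 : Fin n) ≠ 0 := by
    intro h
    have : ((1 : ℕ) : Fin n) = ((0 : ℕ) : Fin n) := by push_cast; exact h
    have := natInj 1 0 (by omega) (by omega) this
    omega
  have two_ne : (2 : Fin n) ≠ 0 := by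
    intro h
    have : ((2 : ℕ) : Fin n) = ((0 : ℕ) : Fin n) := by push_cast; exact h
    have := natInj 2 0 (by omega) (by omega) this
    omega
  -- the neighbor sum lemma
  have hnb : ∀ p : Fin n, ∑ i, S.inter (A p) (A i) = S.inter (A p) (A p) + 2 := by
    intro p
    have hsub : ({p - 1, p, p + 1} : Finset (Fin n)) ⊆ Finset.univ := Finset.subset_univ _
    have hvan : ∀ i ∈ Finset.univ, i ∉ ({p - 1, p, p + 1} : Finset (Fin n)) →
        S.inter (A p) (A i) = 0 := by
      intro i _ hi
      simp only [Finset.mem_insert, Finset.mem_singleton, not_or] at hi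
      refine ht0 p i hi.2.1 hi.2.2 ?_
      intro h
      exact hi.1 (by rw [h]; abel)
    rw [← Finset.sum_subset hsub hvan]
    have d1 : p - 1 ∉ ({p, p + 1} : Finset (Fin n)) := by
      simp only [Finset.mem_insert, Finset.mem_singleton, not_or]
      constructor
      · intro h
        apply one_ne
        calc (1 : Fin n) = p - (p - 1) := by abel
          _ = 0 := sub_eq_zero_of_eq h.symm
      · intro h
        apply two_ne
        calc (2 : Fin n) = (p + 1) - (p - 1) := by rw [← one_add_one_eq_two]; abel
          _ = 0 := sub_eq_zero_of_eq h.symm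
    have d2 : p ∉ ({p + 1} : Finset (Fin n)) := by
      simp only [Finset.mem_singleton]
      intro h
      apply one_ne
      calc (1 : Fin n) = (p + 1) - p := by abel
        _ = 0 := sub_eq_zero_of_eq h.symm
    rw [show ({p - 1, p, p + 1} : Finset (Fin n)) = insert (p - 1) (insert p {p + 1}) from rfl,
      Finset.sum_insert d1, Finset.sum_insert d2, Finset.sum_singleton]
    have hprev : S.inter (A p) (A (p - 1)) = 1 := by
      rw [S.inter_symm]
      have := ht1 (p - 1)
      rwa [sub_add_cancel] at this
    rw [hprev, ht1 p]
    ring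
  -- the cross terms
  set f : ℕ → ℕ → ℤ := fun i j => S.inter (A (k + (i : Fin n))) (A (k + (j : Fin n))) with hf
  have hcast : ∀ i : ℕ, ((i + 1 : ℕ) : Fin n) = (i : Fin n) + 1 := by
    intro i; push_cast; ring
  have h1 : ∀ i, i + 1 < m → f i (i + 1) = 1 := by
    intro i _
    show S.inter (A (k + (i : Fin n))) (A (k + ((i + 1 : ℕ) : Fin n))) = 1
    rw [hcast, ← add_assoc]
    exact ht1 _
  have h1' : ∀ i, i + 1 < m → f (i + 1) i = 1 := by
    intro i hi
    show S.inter (A (k + ((i + 1 : ℕ) : Fin n))) (A (k + (i : Fin n))) = 1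
    rw [S.inter_symm, hcast, ← add_assoc]
    exact ht1 _
  have h0 : ∀ i j, i < m → j < m → i ≠ j → j ≠ i + 1 → i ≠ j + 1 → f i j = 0 := by
    intro i j hi hj hij hji1 hij1
    refine ht0 _ _ ?_ ?_ ?_
    · intro h
      exact hij (natInj j i (by omega) (by omega) (add_left_cancel h)).symm
    · intro h
      rw [add_assoc, ← hcast] at h
      have := add_left_cancel h
      exact hji1 (natInj j (i + 1) (by omega) (by omega) this)
    · intro h
      rw [add_assoc, ← hcast] at h
      have := add_left_cancel h
      exact hij1 (natInj i (j + 1) (by omega) (by omega) this)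
  -- self-intersection of the segment
  set D := ∑ j ∈ Finset.range m, A (k + (j : Fin n)) with hD
  have hDD : S.inter D D = (∑ i ∈ Finset.range m, f i i) + 2 * ((m : ℤ) - 1) := by
    rw [hD, S.inter_sum_left']
    have : ∀ j ∈ Finset.range m, S.inter (A (k + (j : Fin n))) D
        = ∑ i ∈ Finset.range m, f j i := by
      intro j _
      rw [hD, S.inter_sum_right']
    rw [Finset.sum_congr rfl this]
    exact dsum_aux f m hm1 h1 h1' h0
  have hDK : S.inter D (∑ i, A i) = (∑ i ∈ Finset.range m, f i i) + 2 * (m : ℤ) := by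
    rw [hD, S.inter_sum_left']
    have : ∀ j ∈ Finset.range m, S.inter (A (k + (j : Fin n))) (∑ i, A i)
        = f j j + 2 := by
      intro j _
      rw [S.inter_sum_right']
      exact hnb _
    rw [Finset.sum_congr rfl this, Finset.sum_add_distrib]
    simp [mul_comm]
  constructor
  · show S.chi (-D) = 0
    have hrr := S.riemannRoch (-D)
    have he : -D - S.K = -D + -S.K := sub_eq_add_neg _ _
    have hKs : -S.K = ∑ i, A i := htK.symm
    rw [he, S.inter_neg_left', S.inter_add_right', S.inter_neg_right', hKs, hDK, hDD] at hrr
    unfold Surface.chi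
    omega
  · rw [hDD]
    have : ∀ j ∈ Finset.range m,
        S.inter (A (k + (j : Fin n))) (A (k + (j : Fin n))) + 2 = f j j + 2 := by
      intro j _; rfl
    rw [Finset.sum_congr rfl this, Finset.sum_add_distrib]
    simp [mul_comm]
    ring
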